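/- Let n ≥ 2 and let B = [B₁|B₂] ∈ ℂ^{n×n×2} be a tensor whose slices B₁, B₂ ∈ ℂ^{n×n} satisfy: B₁ is invertible and the matrix B₂B₁⁻¹ has pairwise distinct eigenvalues. Then the tensor rank of B equals n. -/

import Mathlib

open Matrix Finset

/-- The tensor rank of an array `A ∈ 𝔽^{l×m×n}`: the minimal `r` such that `A` is a sum of
`r` elementary (decomposable) tensors `x ⊗ y ⊗ z = (x_i y_j z_k)`. -/
noncomputable def tensorRank {𝔽 : Type*} [Field 𝔽] {l m n : ℕ}
    (A : Fin l → Fin m → Fin n → 𝔽) : ℕ :=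
  sInf {r : ℕ | ∃ (x : Fin r → Fin l → 𝔽) (y : Fin r → Fin m → 𝔽) (z : Fin r → Fin n → 𝔽),
      A = ∑ i : Fin r, fun p q s => x i p * y i q * z i s}

/-- The multilinear matrix multiplication: `(L,M,N)·A` has entries
`b_{pqr} = Σ_{i,j,k} L_{pi} M_{qj} N_{rk} a_{ijk}`. -/
def mulAct {𝔽 : Type*} [Field 𝔽] {l m n : ℕ}
    (L : Matrix (Fin l) (Fin l) 𝔽) (M : Matrix (Fin m) (Fin m) 𝔽) (N : Matrix (Fin n) (Fin n) 𝔽)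
    (A : Fin l → Fin m → Fin n → 𝔽) : Fin l → Fin m → Fin n → 𝔽 :=
  fun p q r => ∑ i, ∑ j, ∑ k, L p i * M q j * N r k * A i j k

/-- The elementary (decomposable) tensor `x ⊗ y ⊗ z = (x_i y_j z_k)`. -/
def elemT {𝔽 : Type*} [Field 𝔽] {l m n : ℕ}
    (x : Fin l → 𝔽) (y : Fin m → 𝔽) (z : Fin n → 𝔽) : Fin l → Fin m → Fin n → 𝔽 :=
  fun i j k => x i * y j * z k

/-- Evaluating the characteristic polynomial of a matrix gives a determinant. -/
lemma eval_charpoly_aux {n : ℕ} (A : Matrix (Fin n) (Fin n) ℂ) (μ : ℂ) :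
    A.charpoly.eval μ = (Matrix.diagonal (fun _ : Fin n => μ) - A).det := by
  unfold Matrix.charpoly
  rw [← Polynomial.coe_evalRingHom, RingHom.map_det]
  congr 1
  ext i j
  by_cases h : i = j <;>
    simp [Matrix.charmatrix_apply, Matrix.diagonal_apply, h]

/-- Let `n ≥ 2` and let `B = [B₁|B₂] ∈ ℂ^{n×n×2}` be a tensor whose slices
`B₁ = (b_{ij0})`, `B₂ = (b_{ij1})` satisfy: `B₁` is invertible and `B₂ B₁⁻¹` has pairwise
distinct eigenvalues (its characteristic polynomial has `n` distinct roots). Then the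
tensor rank of `B` equals `n`. -/
theorem tensorRank_eq_n_of_simple_spectrum_slices
    {n : ℕ} (hn : 2 ≤ n) (B : Fin n → Fin n → Fin 2 → ℂ)
    (hB₁ : IsUnit (Matrix.of fun i j => B i j (0 : Fin 2)))
    (hsimple : (((Matrix.of fun i j => B i j (1 : Fin 2)) *
        (Matrix.of fun i j => B i j (0 : Fin 2))⁻¹ :
        Matrix (Fin n) (Fin n) ℂ)).charpoly.roots.Nodup) :
    tensorRank B = n := by
  classical
  haveI : Nonempty (Fin n) := ⟨⟨0, by omega⟩⟩
  set M1 : Matrix (Fin n) (Fin n) ℂ := Matrix.of fun i j => B i j (0 : Fin 2) with hM1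
  set M2 : Matrix (Fin n) (Fin n) ℂ := Matrix.of fun i j => B i j (1 : Fin 2) with hM2
  set A : Matrix (Fin n) (Fin n) ℂ := M2 * M1⁻¹ with hA
  have hAM1 : A * M1 = M2 := by
    rw [hA, Matrix.mul_assoc,
      Matrix.nonsing_inv_mul _ ((Matrix.isUnit_iff_isUnit_det _).mp hB₁), Matrix.mul_one]
  -- the eigenvalues
  have hdeg : A.charpoly.natDegree = n := by
    rw [Matrix.charpoly_natDegree_eq_dim, Fintype.card_fin]
  have hcard : A.charpoly.roots.card = n := by
    have h := Polynomial.splits_iff_card_roots.mp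
      (IsAlgClosed.splits A.charpoly)
    rw [hdeg] at h
    exact h
  have hne : A.charpoly ≠ 0 := (Matrix.charpoly_monic A).ne_zero
  have hfcard : A.charpoly.roots.toFinset.card = n := by
    rw [Multiset.toFinset_card_of_nodup hsimple, hcard]
  let e := (A.charpoly.roots.toFinset.equivFinOfCardEq hfcard).symm
  let μ : Fin n → ℂ := fun t => (e t : ℂ)
  have hμinj : Function.Injective μ := fun a b hab => e.injective (Subtype.ext hab)
  have hroot : ∀ t, (Matrix.diagonal (fun _ : Fin n => μ t) - A).det = 0 := by
    intro t
    rw [← eval_charpoly_aux]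
    have hm : μ t ∈ A.charpoly.roots := Multiset.mem_toFinset.mp (e t).2
    exact (Polynomial.mem_roots hne).mp hm
  have hev : ∀ t, ∃ v : Fin n → ℂ, v ≠ 0 ∧ A *ᵥ v = μ t • v := by
    intro t
    obtain ⟨v, hv0, hv⟩ := (Matrix.exists_mulVec_eq_zero_iff).mpr (hroot t)
    refine ⟨v, hv0, ?_⟩
    rw [Matrix.sub_mulVec, sub_eq_zero] at hv
    have hd : Matrix.diagonal (fun _ : Fin n => μ t) *ᵥ v = μ t • v := by
      funext i
      simp [Matrix.mulVec_diagonal]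
    rw [← hv, hd]
  choose v hv0 hvA using hev
  have hli : LinearIndependent ℂ v := by
    apply Module.End.eigenvectors_linearIndependent' (Matrix.mulVecLin A) μ hμinj v
    intro t
    exact ⟨Module.End.mem_eigenspace_iff.mpr (by simpa using hvA t), hv0 t⟩
  have hcardeq : Fintype.card (Fin n) = Module.finrank ℂ (Fin n → ℂ) := by
    simp
  set b := basisOfLinearIndependentOfCardEqFinrank hli hcardeq with hbdef
  have hbcoe : ⇑b = v := coe_basisOfLinearIndependentOfCardEqFinrank hli hcardeq
  set W : Fin n → Fin n → ℂ := fun t j => b.repr (fun i => M1 i j) t with hW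
  have hcol : ∀ j, (fun i => M1 i j) = ∑ t, W t j • v t := by
    intro j
    conv_lhs => rw [← b.sum_repr (fun i => M1 i j)]
    rw [hbcoe]
  have h2col : ∀ j, (fun i => M2 i j) = ∑ t, (W t j * μ t) • v t := by
    intro j
    have hcv : (fun i => M2 i j) = A.mulVecLin (fun i => M1 i j) := by
      funext i
      rw [← hAM1]
      simp [Matrix.mul_apply, Matrix.mulVec, dotProduct]
    rw [hcv, hcol j, map_sum]
    refine Finset.sum_congr rfl fun t _ => ?_
    rw [LinearMap.map_smul, Matrix.mulVecLin_apply, hvA t, smul_smul]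
  -- membership: rank ≤ n
  have hmem : n ∈ {r : ℕ | ∃ (x : Fin r → Fin n → ℂ) (y : Fin r → Fin n → ℂ)
      (z : Fin r → Fin 2 → ℂ),
      B = ∑ i : Fin r, fun p q s => x i p * y i q * z i s} := by
    refine ⟨fun t i => v t i, fun t j => W t j, fun t k => if k = 0 then 1 else μ t, ?_⟩
    funext i j k
    rw [Finset.sum_apply, Finset.sum_apply, Finset.sum_apply]
    fin_cases k
    · simp only [Fin.zero_eta, Fin.isValue]
      have h1 := congrFun (hcol j) i
      rw [Finset.sum_apply] at h1
      simp only [Pi.smul_apply, smul_eq_mul] at h1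
      have : B i j (0 : Fin 2) = M1 i j := rfl
      rw [this, h1]
      refine Finset.sum_congr rfl fun t _ => ?_
      simp [mul_comm]
    · simp only [Fin.mk_one, Fin.isValue]
      have h2 := congrFun (h2col j) i
      rw [Finset.sum_apply] at h2
      simp only [Pi.smul_apply, smul_eq_mul] at h2
      have : B i j (1 : Fin 2) = M2 i j := rfl
      rw [this, h2]
      refine Finset.sum_congr rfl fun t _ => ?_
      norm_num
      ring
  -- lower bound
  have hlb : ∀ r ∈ {r : ℕ | ∃ (x : Fin r → Fin n → ℂ) (y : Fin r → Fin n → ℂ)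
      (z : Fin r → Fin 2 → ℂ),
      B = ∑ i : Fin r, fun p q s => x i p * y i q * z i s}, n ≤ r := by
    rintro r ⟨x, y, z, hxyz⟩
    set X : Matrix (Fin n) (Fin r) ℂ := Matrix.of fun i t => x t i with hX
    set Y : Matrix (Fin r) (Fin n) ℂ := Matrix.of fun t j => y t j * z t 0 with hY
    have hfac : M1 = X * Y := by
      ext i j
      have h0 := congrFun (congrFun (congrFun hxyz i) j) (0 : Fin 2)
      rw [Finset.sum_apply, Finset.sum_apply, Finset.sum_apply] at h0
      have : M1 i j = B i j (0 : Fin 2) := rfl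
      rw [this, h0, Matrix.mul_apply]
      refine Finset.sum_congr rfl fun t _ => ?_
      simp [hX, hY, mul_assoc]
    have h1 : M1.rank = n := by rw [Matrix.rank_of_isUnit M1 hB₁, Fintype.card_fin]
    calc n = M1.rank := h1.symm
      _ = (X * Y).rank := by rw [hfac]
      _ ≤ X.rank := Matrix.rank_mul_le_left X Y
      _ ≤ Fintype.card (Fin r) := Matrix.rank_le_card_width X
      _ = r := Fintype.card_fin r
  exact le_antisymm (Nat.sInf_le hmem) (le_csInf ⟨n, hmem⟩ hlb)
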